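/- For Nesterov's accelerated gradient method on a convex L-smooth function F with parameters θ_t satisfying θ_t ≥ 1, θ_0 = 1, and θ_t(θ_t - 1) ≤ θ_{t-1}², the potential D_t := θ_{t-1}²(F(w^t) - F(w⋆)) + (L/2)‖u^t - w⋆‖² is nonincreasing, where the iterates are z^t := (1 - 1/θ_t)w^t + (1/θ_t)u^t, w^{t+1} := z^t - (1/L)∇F(z^t), u^{t+1} := u^t - (θ_t/L)∇F(z^t). -/

import Mathlib

open Set

variable {p : ℕ}

lemma line_hasDerivAt (F : EuclideanSpace ℝ (Fin p) → ℝ) (hdiff : Differentiable ℝ F)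
    (x v : EuclideanSpace ℝ (Fin p)) (t : ℝ) :
    HasDerivAt (fun s : ℝ => F (x + s • v)) (inner ℝ (gradient F (x + t • v)) v : ℝ) t := by
  have hc : HasDerivAt (fun s : ℝ => x + s • v) v t := by
    simpa using ((hasDerivAt_id t).smul_const v).const_add x
  have hF := ((hdiff (x + t • v)).hasGradientAt).hasFDerivAt
  have := hF.comp_hasDerivAt t hc
  exact this.congr_deriv (by simp)

lemma convex_grad_ineq (F : EuclideanSpace ℝ (Fin p) → ℝ) (hdiff : Differentiable ℝ F)
    (hconv : ConvexOn ℝ Set.univ F) (x y : EuclideanSpace ℝ (Fin p)) :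
    F x + (inner ℝ (gradient F x) (y - x) : ℝ) ≤ F y := by
  set v := y - x with hv
  have hφconv : ConvexOn ℝ Set.univ (fun s : ℝ => F (x + s • v)) := by
    have := hconv.comp_affineMap (AffineMap.lineMap x (x + v) : ℝ →ᵃ[ℝ] EuclideanSpace ℝ (Fin p))
    simpa [Function.comp_def, AffineMap.lineMap_apply, add_comm] using this
  have hd : HasDerivAt (fun s : ℝ => F (x + s • v)) (inner ℝ (gradient F x) v : ℝ) 0 := by
    simpa using line_hasDerivAt F hdiff x v 0
  have := hφconv.le_slope_of_hasDerivAt (mem_univ (0:ℝ)) (mem_univ (1:ℝ)) one_pos hd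
  rw [slope_def_field] at this
  simp only [zero_smul, add_zero, one_smul, div_one, sub_zero] at this
  have h1 : x + v = y := by rw [hv]; abel
  rw [h1] at this
  linarith

lemma descent_lemma (F : EuclideanSpace ℝ (Fin p) → ℝ) (L : ℝ) (hL : 0 < L)
    (hdiff : Differentiable ℝ F)
    (hlip : ∀ w w' : EuclideanSpace ℝ (Fin p),
      ‖gradient F w - gradient F w'‖ ≤ L * ‖w - w'‖)
    (x y : EuclideanSpace ℝ (Fin p)) :
    F y ≤ F x + (inner ℝ (gradient F x) (y - x) : ℝ) + L / 2 * ‖y - x‖ ^ 2 := by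
  set v := y - x with hv
  set g0 := gradient F x with hg0
  set ψ : ℝ → ℝ := fun t => F (x + t • v) - t * (inner ℝ g0 v : ℝ) - L * t ^ 2 / 2 * ‖v‖ ^ 2
    with hψ
  have hψd : ∀ t : ℝ, HasDerivAt ψ
      ((inner ℝ (gradient F (x + t • v)) v : ℝ) - (inner ℝ g0 v : ℝ) - L * t * ‖v‖ ^ 2) t := by
    intro t
    have h1 := line_hasDerivAt F hdiff x v t
    have h2 : HasDerivAt (fun t : ℝ => t * (inner ℝ g0 v : ℝ)) (inner ℝ g0 v : ℝ) t := by
      simpa using (hasDerivAt_id t).mul_const (inner ℝ g0 v : ℝ)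
    have h3 : HasDerivAt (fun t : ℝ => L * t ^ 2 / 2 * ‖v‖ ^ 2) (L * t * ‖v‖ ^ 2) t := by
      have : HasDerivAt (fun t : ℝ => t ^ 2) (2 * t) t := by
        simpa using hasDerivAt_pow 2 t
      have := ((this.const_mul L).div_const 2).mul_const (‖v‖ ^ 2)
      exact this.congr_deriv (by ring)
    exact (h1.sub h2).sub h3
  have hanti : AntitoneOn ψ (Icc (0:ℝ) 1) := by
    apply antitoneOn_of_deriv_nonpos (convex_Icc 0 1)
    · exact fun t _ => ((hψd t).continuousAt).continuousWithinAt
    · exact fun t _ => ((hψd t).differentiableAt).differentiableWithinAt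
    · intro t ht
      rw [interior_Icc] at ht
      rw [(hψd t).deriv]
      have hbound : (inner ℝ (gradient F (x + t • v)) v : ℝ) - (inner ℝ g0 v : ℝ)
          ≤ L * t * ‖v‖ ^ 2 := by
        have h1 : (inner ℝ (gradient F (x + t • v)) v : ℝ) - (inner ℝ g0 v : ℝ)
            = (inner ℝ (gradient F (x + t • v) - g0) v : ℝ) := by
          rw [inner_sub_left]
        rw [h1]
        calc (inner ℝ (gradient F (x + t • v) - g0) v : ℝ)
            ≤ ‖gradient F (x + t • v) - g0‖ * ‖v‖ := real_inner_le_norm _ _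
          _ ≤ (L * ‖(x + t • v) - x‖) * ‖v‖ := by
              apply mul_le_mul_of_nonneg_right (hlip _ _) (norm_nonneg _)
          _ = L * t * ‖v‖ ^ 2 := by
              rw [add_sub_cancel_left, norm_smul]
              simp [abs_of_pos ht.1]
              ring
      linarith
  have := hanti (left_mem_Icc.mpr zero_le_one) (right_mem_Icc.mpr zero_le_one) zero_le_one
  simp only [hψ, zero_smul, add_zero, zero_mul, one_smul, one_mul, one_pow, mul_one,
    sub_zero] at this
  have h1 : x + v = y := by rw [hv]; abel
  rw [h1] at this
  nlinarith [this]

set_option maxHeartbeats 1000000 in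
/-- Nesterov's accelerated gradient method: the potential
`D t = θ_{t-1}² (F w^t - F w⋆) + (L/2)‖u^t - w⋆‖²` is nonincreasing.
Here `θp t` denotes `θ_{t-1}`, with `θp 0 = θ_{-1} = 1/2`. -/
theorem nesterov_potential_nonincreasing {p : ℕ}
    (F : EuclideanSpace ℝ (Fin p) → ℝ)
    (L : ℝ) (hL : 0 < L) (hdiff : Differentiable ℝ F)
    (hconv : ConvexOn ℝ Set.univ F)
    (hlip : ∀ w w' : EuclideanSpace ℝ (Fin p),
      ‖gradient F w - gradient F w'‖ ≤ L * ‖w - w'‖)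
    (wstar : EuclideanSpace ℝ (Fin p)) (hmin : ∀ z, F wstar ≤ F z)
    (θ : ℕ → ℝ) (hθ1 : ∀ t, 1 ≤ θ t) (hθ0 : θ 0 = 1)
    (θp : ℕ → ℝ) (hθp0 : θp 0 = 1 / 2) (hθp : ∀ t, θp (t + 1) = θ t)
    (hcond : ∀ t, θ t * (θ t - 1) ≤ (θp t) ^ 2)
    (w u z : ℕ → EuclideanSpace ℝ (Fin p)) (hinit : w 0 = u 0)
    (hz : ∀ t, z t = (1 - 1 / θ t) • w t + (1 / θ t) • u t)
    (hw : ∀ t, w (t + 1) = z t - (1 / L) • gradient F (z t))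
    (hu : ∀ t, u (t + 1) = u t - (θ t / L) • gradient F (z t))
    (D : ℕ → ℝ)
    (hD : ∀ t, D t = (θp t) ^ 2 * (F (w t) - F wstar) + L / 2 * ‖u t - wstar‖ ^ 2) :
    ∀ t : ℕ, D (t + 1) ≤ D t := by
  intro t
  set a := θ t with ha
  set b := θp t with hb
  set g := gradient F (z t) with hg
  have ha1 : (1:ℝ) ≤ a := hθ1 t
  have ha0 : (0:ℝ) < a := lt_of_lt_of_le one_pos ha1
  have hL0 : L ≠ 0 := ne_of_gt hL
  have hA : 0 ≤ F (w t) - F wstar := sub_nonneg.mpr (hmin _)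
  set I : ℝ := inner ℝ (u t - wstar) g with hI
  -- descent step
  have hdesc : F (w (t + 1)) ≤ F (z t) - 1 / (2 * L) * ‖g‖ ^ 2 := by
    have h := descent_lemma F L hL hdiff hlip (z t) (w (t + 1))
    have hsub : w (t + 1) - z t = -((1 / L) • g) := by rw [hw t]; abel
    rw [hsub, inner_neg_right, real_inner_smul_right, real_inner_self_eq_norm_sq,
      norm_neg, norm_smul] at h
    rw [Real.norm_eq_abs, abs_of_pos (by positivity : (0:ℝ) < 1 / L)] at h
    have e1 : L / 2 * (1 / L * ‖g‖) ^ 2 = 1 / (2 * L) * ‖g‖ ^ 2 := by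
      field_simp
    have e2 : 1 / L * ‖g‖ ^ 2 - 1 / (2 * L) * ‖g‖ ^ 2 = 1 / (2 * L) * ‖g‖ ^ 2 := by
      field_simp; ring
    linarith [h, e1, e2]
  -- convexity at w t and wstar
  have hcw : F (z t) + (inner ℝ g (w t - z t) : ℝ) ≤ F (w t) :=
    convex_grad_ineq F hdiff hconv (z t) (w t)
  have hcs : F (z t) + (inner ℝ g (wstar - z t) : ℝ) ≤ F wstar :=
    convex_grad_ineq F hdiff hconv (z t) wstar
  -- vector identity
  have hza : a • z t = (a - 1) • w t + u t := by
    have h1 : a * (1 - 1 / a) = a - 1 := by field_simp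
    have h2 : a * (1 / a) = 1 := by field_simp
    rw [hz t, smul_add, smul_smul, smul_smul, h1, h2, one_smul]
  have hvec : (a - 1) • (w t - z t) + (wstar - z t) = wstar - u t := by
    have h1 : (a - 1) • (w t - z t) + (wstar - z t) = (a - 1) • w t + wstar - a • z t := by
      module
    rw [h1, hza]; abel
  have hkey : (a - 1) * (inner ℝ g (w t - z t) : ℝ) + (inner ℝ g (wstar - z t) : ℝ)
      = (inner ℝ g (wstar - u t) : ℝ) := by
    rw [← real_inner_smul_right, ← inner_add_right, hvec]
  have hJ : (inner ℝ g (wstar - u t) : ℝ) = -I := by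
    rw [hI, real_inner_comm, ← neg_sub (u t) wstar, inner_neg_left]
  -- combined convexity estimate: a * F(z) - I ≤ (a-1) F(w) + F⋆
  have hstar : a * F (z t) - I ≤ (a - 1) * F (w t) + F wstar := by
    have e1 : (a - 1) * F (z t) + (a - 1) * (inner ℝ g (w t - z t) : ℝ)
        ≤ (a - 1) * F (w t) := by
      rw [← mul_add]
      exact mul_le_mul_of_nonneg_left hcw (by linarith)
    have hid : a * F (z t) = (a - 1) * F (z t) + F (z t) := by ring
    linarith [e1, hcs, hkey, hJ]
  -- norm expansion
  have hnorm : ‖u (t + 1) - wstar‖ ^ 2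
      = ‖u t - wstar‖ ^ 2 - 2 * (a / L) * I + (a / L) ^ 2 * ‖g‖ ^ 2 := by
    have hsub : u (t + 1) - wstar = (u t - wstar) - (a / L) • g := by rw [hu t]; abel
    rw [hsub, norm_sub_sq_real, real_inner_smul_right, norm_smul, Real.norm_eq_abs,
      abs_of_pos (by positivity : (0:ℝ) < a / L), mul_pow, ← hI]
    ring
  -- products
  have h1 : a ^ 2 * F (w (t + 1)) ≤ a ^ 2 * (F (z t) - 1 / (2 * L) * ‖g‖ ^ 2) :=
    mul_le_mul_of_nonneg_left hdesc (sq_nonneg a)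
  have h2 : a * (a * F (z t) - I) ≤ a * ((a - 1) * F (w t) + F wstar) :=
    mul_le_mul_of_nonneg_left hstar ha0.le
  have h3 : a * (a - 1) * (F (w t) - F wstar) ≤ b ^ 2 * (F (w t) - F wstar) :=
    mul_le_mul_of_nonneg_right (hcond t) hA
  have eL1 : L / 2 * ((a / L) ^ 2 * ‖g‖ ^ 2) = a ^ 2 * (1 / (2 * L) * ‖g‖ ^ 2) := by
    field_simp
  have eL2 : L / 2 * (2 * (a / L) * I) = a * I := by
    field_simp
  rw [hD (t + 1), hD t, hθp t, ← ha, ← hb, hnorm]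
  nlinarith [h1, h2, h3, eL1, eL2]
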